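/- Let X be a compact geodesic metric space with more than one point, and let w be a Whitney map on X. Then for every ε₀ > 0 there exists t₀ > 0 such that for every x ∈ X and every δ ≥ 0, if w applied to the nonempty compact set Metric.closedBall x δ is less than t₀, then δ < ε₀. (Every closed ball whose Whitney value is below t₀ has radius below ε₀.) -/

import Mathlib

open Metric TopologicalSpace Set Bornology

lemma ediam_le_add {X : Type*} [MetricSpace X] (s t : Set X) :
    EMetric.diam s ≤ EMetric.diam t + 2 * EMetric.hausdorffEdist s t := by
  rcases eq_or_ne (EMetric.diam t + 2 * EMetric.hausdorffEdist s t) ⊤ with h | h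
  · simp [h]
  rw [ENNReal.add_ne_top] at h
  have hdt : EMetric.diam t ≠ ⊤ := h.1
  have hH : EMetric.hausdorffEdist s t ≠ ⊤ := by
    intro hc; rw [hc] at h; simp at h
  apply EMetric.diam_le
  intro p hp q hq
  refine ENNReal.le_of_forall_pos_le_add fun η hη _ => ?_
  have hlt : EMetric.hausdorffEdist s t < EMetric.hausdorffEdist s t + η / 2 :=
    ENNReal.lt_add_right hH (by simp [hη.ne'])
  obtain ⟨p', hp', hpp'⟩ := EMetric.exists_edist_lt_of_hausdorffEdist_lt hp hlt
  obtain ⟨q', hq', hqq'⟩ := EMetric.exists_edist_lt_of_hausdorffEdist_lt hq hlt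
  calc edist p q ≤ edist p p' + edist p' q' + edist q' q := edist_triangle4 _ _ _ _
    _ ≤ (EMetric.hausdorffEdist s t + η / 2) + EMetric.diam t
        + (EMetric.hausdorffEdist s t + η / 2) := by
        have h3 : edist q' q ≤ EMetric.hausdorffEdist s t + η / 2 := by
          rw [edist_comm]; exact hqq'.le
        gcongr
        exact EMetric.edist_le_diam_of_mem hp' hq'
    _ = EMetric.diam t + 2 * EMetric.hausdorffEdist s t + (η / 2 + η / 2) := by ring
    _ = EMetric.diam t + 2 * EMetric.hausdorffEdist s t + η := by
        rw [ENNReal.add_halves]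

lemma diam_le_add {X : Type*} [MetricSpace X]
    (A B : NonemptyCompacts X) :
    Metric.diam (A : Set X) ≤ Metric.diam (B : Set X) + 2 * dist A B := by
  have h1 : EMetric.diam (A : Set X) ≠ ⊤ := A.isCompact.isBounded.ediam_ne_top
  have h2 : EMetric.diam (B : Set X) ≠ ⊤ := B.isCompact.isBounded.ediam_ne_top
  have hH : EMetric.hausdorffEdist (A : Set X) (B : Set X) ≠ ⊤ :=
    Metric.hausdorffEdist_ne_top_of_nonempty_of_bounded A.nonempty B.nonempty
      A.isCompact.isBounded B.isCompact.isBounded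
  have key := ediam_le_add (A : Set X) (B : Set X)
  have h2' : EMetric.diam (B : Set X) + 2 * EMetric.hausdorffEdist (A : Set X) (B : Set X) ≠ ⊤ :=
    ENNReal.add_ne_top.2 ⟨h2, ENNReal.mul_ne_top (by simp) hH⟩
  calc Metric.diam (A : Set X) = (EMetric.diam (A : Set X)).toReal := rfl
    _ ≤ (EMetric.diam (B : Set X)
        + 2 * EMetric.hausdorffEdist (A : Set X) (B : Set X)).toReal :=
      ENNReal.toReal_mono h2' key
    _ = Metric.diam (B : Set X) + 2 * dist A B := by
      rw [ENNReal.toReal_add h2 (ENNReal.mul_ne_top (by simp) hH), ENNReal.toReal_mul,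
        NonemptyCompacts.dist_eq]
      simp [Metric.hausdorffDist, Metric.diam]
      rfl

lemma diam_lipschitz {X : Type*} [MetricSpace X] :
    LipschitzWith 2 (fun A : NonemptyCompacts X => Metric.diam (A : Set X)) :=
  LipschitzWith.of_dist_le_mul fun A B => by
    rw [Real.dist_eq, abs_sub_le_iff]
    have h1 := diam_le_add A B
    have h2 := diam_le_add B A
    rw [dist_comm] at h2
    constructor <;> · push_cast; linarith

/-- A metric space is geodesic if any two points are joined by a geodesic path. -/
def IsGeodesicMetricSpace (X : Type*) [MetricSpace X] : Prop :=
  ∀ x y : X, ∃ γ : ℝ → X, γ 0 = x ∧ γ (dist x y) = y ∧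
    ∀ s ∈ Set.Icc (0 : ℝ) (dist x y), ∀ t ∈ Set.Icc (0 : ℝ) (dist x y),
      dist (γ s) (γ t) = |s - t|

/-- A Whitney map on the hyperspace of a compact metric space: a continuous function
vanishing on singletons and strictly monotone with respect to strict inclusion. -/
def IsWhitneyMap {X : Type*} [MetricSpace X]
    (w : TopologicalSpace.NonemptyCompacts X → ℝ) : Prop :=
  Continuous w ∧
  (∀ x : X, w ⟨⟨{x}, isCompact_singleton⟩, Set.singleton_nonempty x⟩ = 0) ∧
  (∀ A B : TopologicalSpace.NonemptyCompacts X,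
    (A : Set X) ⊆ (B : Set X) → A ≠ B → w A < w B)

/-- In a compact geodesic metric space with more than one point, for every `ε₀ > 0`
there is a `t₀ > 0` such that every closed ball whose Whitney value is below `t₀` has
radius below `ε₀`. -/
theorem whitney_small_value_small_radius
    {X : Type*} [MetricSpace X] [CompactSpace X] [Nontrivial X]
    (hgeo : IsGeodesicMetricSpace X)
    (w : TopologicalSpace.NonemptyCompacts X → ℝ) (hw : IsWhitneyMap w) :
    ∀ ε₀ : ℝ, 0 < ε₀ → ∃ t₀ : ℝ, 0 < t₀ ∧
      ∀ x : X, ∀ δ : ℝ, ∀ hδ : 0 ≤ δ,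
        w ⟨⟨Metric.closedBall x δ, Metric.isClosed_closedBall.isCompact⟩,
            (Metric.nonempty_closedBall).2 hδ⟩ < t₀ → δ < ε₀ := by
  intro ε₀ hε₀
  obtain ⟨a, b, hab⟩ := exists_pair_ne X
  set D : ℝ := dist a b with hD
  have hDpos : 0 < D := dist_pos.2 hab
  set ε : ℝ := min ε₀ (D / 2) with hεdef
  have hεpos : 0 < ε := lt_min hε₀ (by linarith)
  set S : Set (NonemptyCompacts X) :=
    {A : NonemptyCompacts X | ε ≤ Metric.diam (A : Set X)} with hSdef
  have hSclosed : IsClosed S :=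
    isClosed_le continuous_const diam_lipschitz.continuous
  have hScompact : IsCompact S := hSclosed.isCompact
  have hSne : S.Nonempty := by
    refine ⟨⟨⟨univ, isCompact_univ⟩, univ_nonempty⟩, ?_⟩
    have hd : D ≤ Metric.diam (univ : Set X) :=
      dist_le_diam_of_mem isCompact_univ.isBounded (mem_univ a) (mem_univ b)
    have : ε ≤ D := le_trans (min_le_right _ _) (by linarith)
    exact le_trans this hd
  obtain ⟨A₀, hA₀S, hmin⟩ := hScompact.exists_isMinOn hSne hw.1.continuousOn
  refine ⟨w A₀, ?_, ?_⟩
  · obtain ⟨x, hx⟩ := A₀.nonempty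
    have hsub : ({x} : Set X) ⊆ (A₀ : Set X) := singleton_subset_iff.2 hx
    have hne : (⟨⟨{x}, isCompact_singleton⟩, Set.singleton_nonempty x⟩ :
        NonemptyCompacts X) ≠ A₀ := by
      intro h
      have hcar : ({x} : Set X) = (A₀ : Set X) := by rw [← h]; rfl
      have : Metric.diam (A₀ : Set X) = 0 := by rw [← hcar]; exact Metric.diam_singleton
      rw [hSdef] at hA₀S
      simp only [mem_setOf_eq, this] at hA₀S
      linarith
    have := hw.2.2 _ A₀ hsub hne
    rwa [hw.2.1 x] at this
  · intro x δ hδ hwlt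
    by_contra hcon
    push_neg at hcon
    -- show the closed ball is in S, contradicting minimality
    have hball : (⟨⟨Metric.closedBall x δ, Metric.isClosed_closedBall.isCompact⟩,
        (Metric.nonempty_closedBall).2 hδ⟩ : NonemptyCompacts X) ∈ S := by
      -- find y with dist x y ≥ D / 2
      have hy : ∃ y : X, D / 2 ≤ dist x y := by
        by_contra hy
        push_neg at hy
        have h1 := hy a
        have h2 := hy b
        have := dist_triangle a x b
        rw [dist_comm a x] at this
        linarith
      obtain ⟨y, hy⟩ := hy
      obtain ⟨γ, hγ0, hγd, hγ⟩ := hgeo x y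
      set r : ℝ := min δ (dist x y) with hrdef
      have hr0 : 0 ≤ r := le_min hδ dist_nonneg
      have hrd : r ≤ dist x y := min_le_right _ _
      have hrmem : r ∈ Set.Icc (0 : ℝ) (dist x y) := ⟨hr0, hrd⟩
      have h0mem : (0 : ℝ) ∈ Set.Icc (0 : ℝ) (dist x y) := ⟨le_refl _, dist_nonneg⟩
      have hdist : dist x (γ r) = r := by
        rw [← hγ0]
        rw [hγ 0 h0mem r hrmem]
        rw [zero_sub, abs_neg, abs_of_nonneg hr0]
      have hzball : γ r ∈ Metric.closedBall x δ := by
        rw [Metric.mem_closedBall, dist_comm, hdist]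
        exact min_le_left _ _
      have hxball : x ∈ Metric.closedBall x δ := Metric.mem_closedBall_self hδ
      have hεr : ε ≤ r := le_min (le_trans (min_le_left _ _) hcon)
        (le_trans (min_le_right _ _) hy)
      have : r ≤ Metric.diam (Metric.closedBall x δ) := by
        rw [← hdist]
        exact dist_le_diam_of_mem Metric.isClosed_closedBall.isCompact.isBounded hxball hzball
      exact le_trans hεr this
    exact absurd hwlt (not_lt.2 (hmin hball))
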